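/- Let d > 1 and let a ≥ b > 0 be integers, written as a = C(s - 1 + d, d) + A with s > 0 and 0 ≤ A < C(s - 1 + d, d - 1), and b = C(t - 1 + d, d) + B with t ≥ 0 and 0 < B ≤ C(t - 1 + d, d - 1). Suppose A + B = C(s - 1 + d, d - 1) + e for some e ≥ 0, and suppose A^{⟨d-1⟩} + B^{⟨d-1⟩} ≤ (C(s - 1 + d, d - 1))^{⟨d-1⟩} + e^{⟨d-1⟩}. Then setting a_1 = C(s + d, d) and b_1 = C(t - 1 + d, d) + e, one has 0 ≤ b_1 < b ≤ a < a_1, a + b = a_1 + b_1, and a^{⟨d⟩} + b^{⟨d⟩} ≤ a_1^{⟨d⟩} + b_1^{⟨d⟩}. -/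
import Mathlib


/-- Macaulay's function `a^{⟨d⟩}`: writing `a` in its Macaulay `d`-binomial representation
`a = C(k_d, d) + C(k_{d-1}, d-1) + ⋯ + C(k_j, j)` (computed greedily: `k_d` is the largest
integer with `C(k_d, d) ≤ a`), we set `a^{⟨d⟩} = C(k_d+1, d+1) + ⋯ + C(k_j+1, j+1)`,
and `0^{⟨d⟩} = 0`. -/
def macaulay : ℕ → ℕ → ℕ
  | _, 0 => 0
  | 0, _ => 0
  | d + 1, a + 1 =>
    let k := Nat.findGreatest (fun k => Nat.choose k (d + 1) ≤ a + 1) (a + d + 2)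
    Nat.choose (k + 1) (d + 2) + macaulay d (a + 1 - Nat.choose k (d + 1))

lemma macaulay_zero (d : ℕ) : macaulay d 0 = 0 := by cases d <;> rfl

lemma choose_lower (d k : ℕ) (hd : 1 ≤ d) (h : d ≤ k) : k - d + 1 ≤ Nat.choose k d := by
  induction k with
  | zero => omega
  | succ k ih =>
    rcases eq_or_lt_of_le h with h | h
    · rw [← h, Nat.choose_self]; omega
    · have h1 := ih (by omega)
      have h2 : 1 ≤ Nat.choose k (d - 1) := Nat.choose_pos (by omega)
      have h3 : Nat.choose (k + 1) d = Nat.choose k (d - 1) + Nat.choose k d := by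
        obtain ⟨d', rfl⟩ : ∃ d', d = d' + 1 := ⟨d - 1, by omega⟩
        simpa using Nat.choose_succ_succ k d'
      omega

lemma macaulay_rep (d k r : ℕ) (hd : 1 ≤ d) (hk : d ≤ k) (hr : r < Nat.choose k (d - 1)) :
    macaulay d (Nat.choose k d + r) = Nat.choose (k + 1) (d + 1) + macaulay (d - 1) r := by
  obtain ⟨d', rfl⟩ : ∃ d', d = d' + 1 := ⟨d - 1, by omega⟩
  simp only [Nat.add_sub_cancel] at hr ⊢
  have hpos : 0 < Nat.choose k (d' + 1) := Nat.choose_pos hk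
  obtain ⟨n, hn⟩ : ∃ n, Nat.choose k (d' + 1) + r = n + 1 := ⟨Nat.choose k (d' + 1) + r - 1, by omega⟩
  rw [hn]
  have hkb : k ≤ n + d' + 1 := by
    have := choose_lower (d' + 1) k (by omega) hk
    omega
  have hpascal : Nat.choose (k + 1) (d' + 1) = Nat.choose k d' + Nat.choose k (d' + 1) :=
    Nat.choose_succ_succ k d'
  have hK : Nat.findGreatest (fun j => Nat.choose j (d' + 1) ≤ n + 1) (n + d' + 2) = k := by
    rw [Nat.findGreatest_eq_iff]
    refine ⟨by omega, fun _ => by omega, fun j hj hjb => ?_⟩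
    simp only [not_le]
    have : Nat.choose (k + 1) (d' + 1) ≤ Nat.choose j (d' + 1) := Nat.choose_mono _ hj
    omega
  have hsub : n + 1 - Nat.choose k (d' + 1) = r := by omega
  show macaulay (d' + 1) (n + 1) = _
  rw [macaulay, hK, hsub]

lemma macaulay_choose (d k : ℕ) (hd : 1 ≤ d) (hk : d ≤ k) :
    macaulay d (Nat.choose k d) = Nat.choose (k + 1) (d + 1) := by
  have h := macaulay_rep d k 0 hd hk (Nat.choose_pos (by omega))
  simpa [macaulay_zero] using h

lemma macaulay_rep' (d k r : ℕ) (hd : 2 ≤ d) (hk : d - 1 ≤ k) (hr : r ≤ Nat.choose k (d - 1)) :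
    macaulay d (Nat.choose k d + r) = Nat.choose (k + 1) (d + 1) + macaulay (d - 1) r := by
  rcases lt_or_eq_of_le hr with hr | hr
  · rcases lt_or_ge k d with hkd | hkd
    · -- k = d - 1, so choose k d = 0 and r < choose (d-1) (d-1) = 1, r = 0
      have hk1 : k = d - 1 := by omega
      have : Nat.choose k (d - 1) = 1 := by rw [hk1, Nat.choose_self]
      have hr0 : r = 0 := by omega
      have hc0 : Nat.choose k d = 0 := Nat.choose_eq_zero_of_lt hkd
      have hc1 : Nat.choose (k + 1) (d + 1) = 0 := Nat.choose_eq_zero_of_lt (by omega)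
      rw [hr0, hc0, hc1, macaulay_zero, macaulay_zero]
    · exact macaulay_rep d k r (by omega) hkd hr
  · subst hr
    have hpascal : Nat.choose k d + Nat.choose k (d - 1) = Nat.choose (k + 1) d := by
      obtain ⟨d', rfl⟩ : ∃ d', d = d' + 1 := ⟨d - 1, by omega⟩
      simp only [Nat.add_sub_cancel]
      rw [Nat.choose_succ_succ k d', Nat.succ_eq_add_one]; omega
    rw [hpascal, macaulay_choose d (k + 1) (by omega) (by omega),
      macaulay_choose (d - 1) k (by omega) hk]
    have : d - 1 + 1 = d := by omega
    rw [this]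
    have h2 : Nat.choose (k + 1 + 1) (d + 1) = Nat.choose (k + 1) d + Nat.choose (k + 1) (d + 1) := by
      rw [Nat.choose_succ_succ (k + 1) d, Nat.succ_eq_add_one]
    omega

/-- Case 2 of the key construction: let `d > 1`, `a ≥ b > 0`, written as
`a = C(s - 1 + d, d) + A` with `s > 0`, `0 ≤ A < C(s - 1 + d, d - 1)`, and
`b = C(t - 1 + d, d) + B` with `t ≥ 0`, `0 < B ≤ C(t - 1 + d, d - 1)`.
Suppose `A + B = C(s - 1 + d, d - 1) + e` for some `e ≥ 0`, and suppose
`A^{⟨d-1⟩} + B^{⟨d-1⟩} ≤ (C(s - 1 + d, d - 1))^{⟨d-1⟩} + e^{⟨d-1⟩}`. Then for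
`a₁ = C(s + d, d)` and `b₁ = C(t - 1 + d, d) + e` we have `0 ≤ b₁ < b ≤ a < a₁`,
`a + b = a₁ + b₁`, and `a^{⟨d⟩} + b^{⟨d⟩} ≤ a₁^{⟨d⟩} + b₁^{⟨d⟩}`.
(Since `t` may be `0`, the quantity `t - 1 + d` is rendered as `t + d - 1` in `ℕ`.) -/
theorem macaulay_case_two (d s t a b A B e : ℕ) (hd : 1 < d) (hb : 0 < b) (hba : b ≤ a)
    (hs : 0 < s)
    (haeq : a = Nat.choose (s - 1 + d) d + A) (hA : A < Nat.choose (s - 1 + d) (d - 1))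
    (hbeq : b = Nat.choose (t + d - 1) d + B)
    (hBpos : 0 < B) (hB : B ≤ Nat.choose (t + d - 1) (d - 1))
    (hABe : A + B = Nat.choose (s - 1 + d) (d - 1) + e)
    (hind : macaulay (d - 1) A + macaulay (d - 1) B ≤
      macaulay (d - 1) (Nat.choose (s - 1 + d) (d - 1)) + macaulay (d - 1) e) :
    Nat.choose (t + d - 1) d + e < b ∧ a < Nat.choose (s + d) d ∧
    a + b = Nat.choose (s + d) d + (Nat.choose (t + d - 1) d + e) ∧
    macaulay d a + macaulay d b ≤
      macaulay d (Nat.choose (s + d) d) + macaulay d (Nat.choose (t + d - 1) d + e) := by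
  set m := s - 1 + d with hm
  have hm1 : m + 1 = s + d := by omega
  have pascal_s : Nat.choose (s + d) d = Nat.choose m (d - 1) + Nat.choose m d := by
    rw [← hm1]
    obtain ⟨d', rfl⟩ : ∃ d', d = d' + 1 := ⟨d - 1, by omega⟩
    simpa using Nat.choose_succ_succ m d'
  refine ⟨by omega, by omega, by omega, ?_⟩
  have ht1 : t + d - 1 + 1 = t + d := by omega
  have hma : macaulay d a = Nat.choose (s + d) (d + 1) + macaulay (d - 1) A := by
    rw [haeq, macaulay_rep d m A (by omega) (by omega) hA, hm1]
  have hmb : macaulay d b = Nat.choose (t + d) (d + 1) + macaulay (d - 1) B := by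
    rw [hbeq, macaulay_rep' d (t + d - 1) B hd (by omega) hB, ht1]
  have hma1 : macaulay d (Nat.choose (s + d) d) = Nat.choose (s + d + 1) (d + 1) :=
    macaulay_choose d (s + d) (by omega) (by omega)
  have hmb1 : macaulay d (Nat.choose (t + d - 1) d + e) =
      Nat.choose (t + d) (d + 1) + macaulay (d - 1) e := by
    rw [macaulay_rep' d (t + d - 1) e hd (by omega) (by omega), ht1]
  have hmC : macaulay (d - 1) (Nat.choose m (d - 1)) = Nat.choose (s + d) d := by
    rw [macaulay_choose (d - 1) m (by omega) (by omega)]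
    congr 1 <;> omega
  have hpascal : Nat.choose (s + d + 1) (d + 1) = Nat.choose (s + d) d + Nat.choose (s + d) (d + 1) :=
    Nat.choose_succ_succ (s + d) d
  rw [hma, hmb, hma1, hmb1]
  omega
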